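/- Let ν be an upwards-skip-free probability measure on ℤ with ν(1) > 0 and (Z_k) the walk with step law ν started at 0, T = inf{k : Z_k < 0}. For every n ≥ 1 and nonnegative integers x_0,...,x_{n-1} with x_{n-1} = 0, the probability P_0(T = n, Z_{T-1-k} = x_k for 0 ≤ k ≤ n-1) equals ν(x_{n-2}-x_{n-1})···ν(x_0-x_1)·ν((-∞,-x_0)); in particular conditionally on Z_{T-1}, the time-reversed pre-T path (Z_{T-1}, Z_{T-2}, ..., Z_0) has the same law as the walk with step distribution ν̂(k) := ν(-k) started at Z_{T-1} and killed at its first entrance into (-∞,0). -/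

import Mathlib

open MeasureTheory ProbabilityTheory Filter
open scoped ENNReal

/-- Finite-dimensional law of the time-reversed pre-`T` path of an upwards-skip-free
random walk: for nonnegative `x_0, …, x_{n-1}` with `x_{n-1} = 0`,
`P(T = n, Z_{T-1-k} = x_k ∀ k < n) = ν(x_{n-2}-x_{n-1}) ⋯ ν(x_0-x_1) · ν((-∞,-x_0))`,
i.e. conditionally on `Z_{T-1}` the reversed path is a walk with step law `ν̂ = ν(-·)`
started at `Z_{T-1}` and killed upon entering the negatives. -/
theorem stmt3
    {Ω : Type*} [MeasurableSpace Ω] (P : Measure Ω) [IsProbabilityMeasure P]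
    (ν : Measure ℤ) [IsProbabilityMeasure ν]
    (hskip : ν (Set.Ioi (1 : ℤ)) = 0) (hν1 : 0 < ν {1})
    (ξ : ℕ → Ω → ℤ) (hmeas : ∀ i, Measurable (ξ i))
    (hindep : iIndepFun ξ P)
    (hlaw : ∀ i, P.map (ξ i) = ν)
    (Z : ℕ → Ω → ℤ) (hZ : ∀ n ω, Z n ω = ∑ i ∈ Finset.range n, ξ i ω)
    (T : Ω → ℕ) (hT : ∀ ω, T ω = sInf {k | Z k ω < 0})
    (hfin : ∀ᵐ ω ∂P, ∃ k, Z k ω < 0) :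
    ∀ n : ℕ, 1 ≤ n → ∀ x : ℕ → ℤ, (∀ k < n, 0 ≤ x k) → x (n - 1) = 0 →
      P {ω | T ω = n ∧ ∀ k < n, Z (T ω - 1 - k) ω = x k}
        = (∏ k ∈ Finset.range (n - 1), ν {x k - x (k + 1)}) * ν (Set.Iio (-(x 0))) := by
  intro n hn x hx hx0
  obtain ⟨m, rfl⟩ : ∃ m, n = m + 1 := ⟨n - 1, by omega⟩
  simp only [Nat.add_sub_cancel] at hx0 ⊢
  set S : ℕ → Set ℤ := fun j => if j = m then Set.Iio (-(x 0)) else {x (m - 1 - j) - x (m - j)}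
    with hS
  have hstep : ∀ j ω, ξ j ω = Z (j + 1) ω - Z j ω := by
    intro j ω
    rw [hZ, hZ, Finset.sum_range_succ]; ring
  have hset : {ω | T ω = m + 1 ∧ ∀ k < m + 1, Z (T ω - 1 - k) ω = x k}
      = ⋂ j ∈ Finset.range (m + 1), ξ j ⁻¹' (S j) := by
    ext ω
    simp only [Set.mem_setOf_eq, Set.mem_iInter, Finset.mem_range, Set.mem_preimage]
    constructor
    · rintro ⟨hTn, hpath⟩ j hj
      have hZj : ∀ k < m + 1, Z (m - k) ω = x k := by
        intro k hk; have := hpath k hk; rwa [hTn, Nat.add_sub_cancel] at this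
      have hne : {k | Z k ω < 0}.Nonempty := by
        by_contra h
        rw [Set.not_nonempty_iff_eq_empty] at h
        rw [hT, h, Nat.sInf_empty] at hTn
        omega
      have hZn : Z (m + 1) ω < 0 := by
        have := Nat.sInf_mem hne
        rw [← hT, hTn] at this
        exact this
      rcases Nat.lt_or_ge j m with hj1 | hj1
      · have h1 : Z j ω = x (m - j) := by
          have := hZj (m - j) (by omega)
          rwa [show m - (m - j) = j by omega] at this
        have h2 : Z (j + 1) ω = x (m - 1 - j) := by
          have := hZj (m - (j + 1)) (by omega)
          rw [show m - (m - (j + 1)) = j + 1 by omega] at this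
          rw [this]; congr 1; omega
        simp only [hS, if_neg (by omega : j ≠ m), Set.mem_singleton_iff]
        rw [hstep, h1, h2]
      · have hje : j = m := by omega
        subst hje
        have h1 : Z j ω = x 0 := by
          have := hZj 0 (by omega); rwa [Nat.sub_zero] at this
        simp only [hS, if_pos rfl, Set.mem_Iio]
        rw [hstep, h1]
        omega
    · intro h
      have hpath : ∀ j, j ≤ m → Z j ω = x (m - j) := by
        intro j
        induction j with
        | zero => intro _; rw [hZ]; simp [hx0]
        | succ j ih =>
          intro hjn
          have hxi := h j (by omega)
          simp only [hS, if_neg (by omega : j ≠ m), Set.mem_singleton_iff] at hxi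
          have hst := hstep j ω
          rw [hxi] at hst
          have hZj := ih (by omega)
          have : Z (j + 1) ω = x (m - 1 - j) := by omega
          rw [this]; congr 1; omega
      have hZn : Z (m + 1) ω < 0 := by
        have hxi := h m (by omega)
        simp only [hS, if_pos rfl, Set.mem_Iio] at hxi
        have h1 : Z m ω = x 0 := by
          have := hpath m le_rfl; rwa [Nat.sub_self] at this
        have := hstep m ω
        omega
      have hTn : T ω = m + 1 := by
        rw [hT]
        apply le_antisymm
        · exact Nat.sInf_le hZn
        · apply le_csInf ⟨m + 1, hZn⟩
          intro k hk
          by_contra hc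
          push_neg at hc
          have := hpath k (by omega)
          have hxm := hx (m - k) (by omega)
          simp only [Set.mem_setOf_eq] at hk
          omega
      refine ⟨hTn, fun k hk => ?_⟩
      rw [hTn, Nat.add_sub_cancel]
      have := hpath (m - k) (by omega)
      rwa [show m - (m - k) = k by omega] at this
  rw [hset]
  have hprod : P (⋂ j ∈ Finset.range (m + 1), ξ j ⁻¹' (S j))
      = ∏ j ∈ Finset.range (m + 1), P (ξ j ⁻¹' (S j)) := by
    apply hindep.meas_biInter
    intro i _
    refine ⟨S i, ?_, rfl⟩
    simp only [hS]
    split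
    · exact measurableSet_Iio
    · exact measurableSet_singleton _
  rw [hprod]
  have hPν : ∀ j, P (ξ j ⁻¹' (S j)) = ν (S j) := by
    intro j
    rw [← hlaw j, Measure.map_apply (hmeas j)]
    simp only [hS]
    split
    · exact measurableSet_Iio
    · exact measurableSet_singleton _
  simp only [hPν]
  rw [Finset.prod_range_succ]
  congr 1
  · rw [← Finset.prod_range_reflect (fun k => ν {x k - x (k + 1)}) m]
    apply Finset.prod_congr rfl
    intro j hj
    rw [Finset.mem_range] at hj
    simp only [hS, if_neg (by omega : j ≠ m)]
    rw [show m - 1 - j + 1 = m - j from by omega]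
  · simp only [hS, if_pos rfl]
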